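/- Let U and V be i.i.d. random vectors in ℝ^d with a log-concave density f. Then h_∞(U - V) = h_2(U); that is, the essential supremum of the density of U - V (which is f ⋆ f̌, where f̌(x) = f(-x)) equals ∫_{ℝ^d} f(x)² dx. -/

import Mathlib

open MeasureTheory ENNReal Pointwise

/-- Convolution of two functions on `ℝ^d`: `(f ⋆ g)(x) = ∫ f(t) g(x - t) dt`. -/
noncomputable def convE {d : ℕ} (f g : EuclideanSpace ℝ (Fin d) → ℝ) :
    EuclideanSpace ℝ (Fin d) → ℝ :=
  fun x => ∫ t, f t * g (x - t)

/-- A nonnegative function on `ℝ^d` is log-concave iff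
`f((1-t)x + ty) ≥ f(x)^{1-t} f(y)^t` for all `x, y` and `t ∈ [0,1]`
(equivalently `f = e^{-V}` with `V : ℝ^d → ℝ ∪ {∞}` convex). -/
def LogConcaveFunE {d : ℕ} (f : EuclideanSpace ℝ (Fin d) → ℝ) : Prop :=
  ∀ (x y : EuclideanSpace ℝ (Fin d)) (t : ℝ), 0 ≤ t → t ≤ 1 →
    f x ^ (1 - t) * f y ^ t ≤ f ((1 - t) • x + t • y)

/-- Essential supremum of a function on `ℝ^d`, valued in `ℝ≥0∞`. -/
noncomputable def essSupNNE {d : ℕ} (f : EuclideanSpace ℝ (Fin d) → ℝ) : ℝ≥0∞ :=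
  essSup (fun x => ENNReal.ofReal (f x)) volume

/-- A nonnegative integrable log-concave function with integral one is (uniformly) bounded. -/
theorem lc_bounded (d : ℕ) (f : EuclideanSpace ℝ (Fin d) → ℝ)
    (hf0 : ∀ x, 0 ≤ f x) (hfm : Measurable f) (hfi : Integrable f)
    (hf1 : ∫ x, f x = 1) (hflc : LogConcaveFunE f) :
    ∃ C : ℝ, 0 < C ∧ ∀ x, f x ≤ C := by
  have hlint : ∫⁻ y, ENNReal.ofReal (f y) = 1 := by
    rw [← ofReal_integral_eq_lintegral_ofReal hfi (Filter.Eventually.of_forall hf0), hf1,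
      ofReal_one]
  -- find a positive superlevel set
  obtain ⟨c, hc0, hK⟩ : ∃ c : ℝ, 0 < c ∧
      0 < volume {y : EuclideanSpace ℝ (Fin d) | c ≤ f y} := by
    by_contra h
    push_neg at h
    have h0 : ∀ n : ℕ, volume {y : EuclideanSpace ℝ (Fin d) | 1/((n:ℝ)+1) ≤ f y} = 0 :=
      fun n => le_antisymm (h _ (by positivity)) zero_le
    have hsub : {y : EuclideanSpace ℝ (Fin d) | 0 < f y}
        ⊆ ⋃ n : ℕ, {y : EuclideanSpace ℝ (Fin d) | 1/((n:ℝ)+1) ≤ f y} := by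
      intro y hy
      obtain ⟨n, hn⟩ := exists_nat_one_div_lt (K := ℝ) (show 0 < f y from hy)
      exact Set.mem_iUnion.2 ⟨n, hn.le⟩
    have h1 : volume {y : EuclideanSpace ℝ (Fin d) | 0 < f y} = 0 :=
      measure_mono_null hsub (measure_iUnion_null fun n => h0 n)
    have h2 : f =ᵐ[volume] 0 := by
      rw [Filter.EventuallyEq, ae_iff]
      refine measure_mono_null ?_ h1
      intro y hy
      simp only [Set.mem_setOf_eq, Pi.zero_apply] at hy ⊢
      exact lt_of_le_of_ne (hf0 y) (Ne.symm hy)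
    rw [integral_congr_ae h2] at hf1
    simp at hf1
  set K := {y : EuclideanSpace ℝ (Fin d) | c ≤ f y} with hKdef
  have hcm : ENNReal.ofReal c * volume K ≤ 1 := by
    calc ENNReal.ofReal c * volume K = ∫⁻ _ in K, ENNReal.ofReal c := (setLIntegral_const K _).symm
      _ ≤ ∫⁻ y in K, ENNReal.ofReal (f y) :=
        setLIntegral_mono hfm.ennreal_ofReal fun y hy => ofReal_le_ofReal hy
      _ ≤ ∫⁻ y, ENNReal.ofReal (f y) := setLIntegral_le_lintegral K _
      _ = 1 := hlint
  have hmtop : volume K ≠ ⊤ := by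
    intro htop
    rw [htop, ENNReal.mul_top (ofReal_pos.mpr hc0).ne'] at hcm
    exact (ENNReal.top_ne_one) (le_antisymm hcm le_top)
  set β : ℝ≥0∞ := ENNReal.ofReal ((2:ℝ)⁻¹ ^ d) * volume K with hβ
  have hβ0 : β ≠ 0 := mul_ne_zero (ofReal_pos.mpr (by positivity)).ne' hK.ne'
  have hβtop : β ≠ ⊤ := ENNReal.mul_ne_top ofReal_ne_top hmtop
  have key : ∀ x, ENNReal.ofReal (f x ^ (2⁻¹:ℝ) * c ^ (2⁻¹:ℝ)) * β ≤ 1 := by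
    intro x
    set s := f x ^ (2⁻¹:ℝ) * c ^ (2⁻¹:ℝ) with hs
    set S := {z : EuclideanSpace ℝ (Fin d) | s ≤ f z} with hSdef
    have hSm : MeasurableSet S := measurableSet_le measurable_const hfm
    have hsub : (fun y => (2⁻¹:ℝ) • x + (2⁻¹:ℝ) • y) '' K ⊆ S := by
      rintro z ⟨y, hy, rfl⟩
      have h1 := hflc x y 2⁻¹ (by norm_num) (by norm_num)
      have h2 : c ^ (2⁻¹:ℝ) ≤ f y ^ (2⁻¹:ℝ) := Real.rpow_le_rpow hc0.le hy (by norm_num)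
      have h3 : s ≤ f x ^ (2⁻¹:ℝ) * f y ^ (2⁻¹:ℝ) :=
        mul_le_mul_of_nonneg_left h2 (Real.rpow_nonneg (hf0 x) _)
      rw [show (1:ℝ) - 2⁻¹ = 2⁻¹ by norm_num] at h1
      exact h3.trans h1
    have himg : volume ((fun y => (2⁻¹:ℝ) • x + (2⁻¹:ℝ) • y) '' K) = β := by
      have himg2 : (fun y : EuclideanSpace ℝ (Fin d) => (2⁻¹:ℝ) • x + (2⁻¹:ℝ) • y) '' K
          = ((2⁻¹:ℝ) • x) +ᵥ ((2⁻¹:ℝ) • K) := by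
        rw [← Set.image_smul, ← Set.image_vadd, Set.image_image]
        rfl
      rw [himg2, measure_vadd, Measure.addHaar_smul, finrank_euclideanSpace_fin, abs_pow,
        abs_inv, abs_two, hβ]
    have hβS : β ≤ volume S := himg ▸ measure_mono hsub
    calc ENNReal.ofReal s * β ≤ ENNReal.ofReal s * volume S :=
          mul_le_mul_right hβS _
      _ = ∫⁻ _ in S, ENNReal.ofReal s := (setLIntegral_const S _).symm
      _ ≤ ∫⁻ y in S, ENNReal.ofReal (f y) :=
        setLIntegral_mono hfm.ennreal_ofReal fun y hy => ofReal_le_ofReal hy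
      _ ≤ ∫⁻ y, ENNReal.ofReal (f y) := setLIntegral_le_lintegral S _
      _ = 1 := hlint
  set A : ℝ := (β⁻¹).toReal with hA
  have hApos : 0 ≤ A := ENNReal.toReal_nonneg
  refine ⟨(A / c ^ (2⁻¹:ℝ)) ^ 2 + 1, by positivity, fun x => ?_⟩
  have h1 : ENNReal.ofReal (f x ^ (2⁻¹:ℝ) * c ^ (2⁻¹:ℝ)) ≤ β⁻¹ :=
    ENNReal.le_inv_iff_mul_le.mpr (key x)
  have h2 : f x ^ (2⁻¹:ℝ) * c ^ (2⁻¹:ℝ) ≤ A :=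
    (ENNReal.ofReal_le_iff_le_toReal (by simpa using hβ0)).mp h1
  have h3 : f x ^ (2⁻¹:ℝ) ≤ A / c ^ (2⁻¹:ℝ) :=
    (le_div_iff₀ (by positivity)).mpr h2
  have h4 : f x = (f x ^ (2⁻¹:ℝ)) ^ (2:ℕ) := by
    rw [← Real.rpow_natCast (f x ^ (2⁻¹:ℝ)) 2, ← Real.rpow_mul (hf0 x)]
    norm_num
  calc f x = (f x ^ (2⁻¹:ℝ)) ^ (2:ℕ) := h4
    _ ≤ (A / c ^ (2⁻¹:ℝ)) ^ 2 := pow_le_pow_left₀ (Real.rpow_nonneg (hf0 x) _) h3 2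
    _ ≤ (A / c ^ (2⁻¹:ℝ)) ^ 2 + 1 := by linarith

theorem hinf_diff_eq_h2 (d : ℕ) (f : EuclideanSpace ℝ (Fin d) → ℝ)
    (hf0 : ∀ x, 0 ≤ f x) (hfm : Measurable f) (hf1 : ∫ x, f x = 1)
    (hflc : LogConcaveFunE f) :
    essSupNNE (convE f (fun x => f (-x))) = ENNReal.ofReal (∫ x, (f x) ^ 2) := by
  classical
  have hfi : Integrable f := by
    by_contra h
    rw [integral_undef h] at hf1
    exact one_ne_zero hf1.symm
  obtain ⟨C, hC0, hC⟩ := lc_bounded d f hf0 hfm hfi hf1 hflc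
  -- f² is integrable
  have hf2m : Measurable fun t : EuclideanSpace ℝ (Fin d) => f t * f t := hfm.mul hfm
  have hf2i : Integrable (fun t : EuclideanSpace ℝ (Fin d) => f t * f t) := by
    refine (hfi.const_mul C).mono' hf2m.aestronglyMeasurable
      (Filter.Eventually.of_forall fun t => ?_)
    rw [Real.norm_eq_abs, abs_of_nonneg (mul_nonneg (hf0 t) (hf0 t))]
    exact mul_le_mul_of_nonneg_right (hC t) (hf0 t)
  set g : EuclideanSpace ℝ (Fin d) → ℝ := fun x => ∫ t, f t * f (t - x) with hg
  have hconv : convE f (fun y => f (-y)) = g := by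
    funext x
    simp only [convE, hg, neg_sub]
  have hgi : ∀ x, Integrable (fun t : EuclideanSpace ℝ (Fin d) => f t * f (t - x)) := by
    intro x
    refine (hfi.const_mul C).mono'
      ((hfm.mul (hfm.comp (measurable_id.sub measurable_const)))).aestronglyMeasurable
      (Filter.Eventually.of_forall fun t => ?_)
    rw [Real.norm_eq_abs, abs_of_nonneg (mul_nonneg (hf0 t) (hf0 _))]
    calc f t * f (t - x) ≤ f t * C := mul_le_mul_of_nonneg_left (hC _) (hf0 t)
      _ = C * f t := mul_comm _ _
  have hg0 : g 0 = ∫ t, f t * f t := by simp [hg]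
  have hgle : ∀ x, g x ≤ g 0 := by
    intro x
    rw [hg0]
    have h2 : Integrable (fun t : EuclideanSpace ℝ (Fin d) => f (t - x) * f (t - x)) :=
      hf2i.comp_sub_right x
    have hb : Integrable
        (fun t : EuclideanSpace ℝ (Fin d) => (f t * f t + f (t - x) * f (t - x)) / 2) :=
      (hf2i.add h2).div_const 2
    calc g x ≤ ∫ t, (f t * f t + f (t - x) * f (t - x)) / 2 := by
          refine integral_mono (hgi x) hb fun t => ?_
          have := sq_nonneg (f t - f (t - x))
          simp only
          nlinarith
      _ = ((∫ t, f t * f t) + ∫ t, f (t - x) * f (t - x)) / 2 := by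
          rw [integral_div, integral_add hf2i h2]
      _ = ∫ t, f t * f t := by
          rw [integral_sub_right_eq_self (fun t => f t * f t) x]
          ring
  have hrgoal : (∫ x, (f x) ^ 2) = g 0 := by
    rw [hg0]
    exact integral_congr_ae (Filter.Eventually.of_forall fun t => by ring)
  rw [hconv, hrgoal]
  show essSup (fun x => ENNReal.ofReal (g x)) volume = ENNReal.ofReal (g 0)
  have hle : essSup (fun x => ENNReal.ofReal (g x)) volume ≤ ENNReal.ofReal (g 0) :=
    essSup_le_of_ae_le _ (Filter.Eventually.of_forall fun x => ofReal_le_ofReal (hgle x))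
  refine le_antisymm hle ?_
  -- continuity of g at 0 via L¹ translation continuity
  have hmem : MemLp f 1 (volume : Measure (EuclideanSpace ℝ (Fin d))) :=
    memLp_one_iff_integrable.mpr hfi
  set F := hmem.toLp f with hF
  set cm : EuclideanSpace ℝ (Fin d) → C(EuclideanSpace ℝ (Fin d), EuclideanSpace ℝ (Fin d)) :=
    fun x => ⟨fun t => t - x, continuous_id.sub continuous_const⟩ with hcm
  have hmp : ∀ x, MeasurePreserving (cm x) volume volume :=
    fun x => measurePreserving_sub_right volume x
  have hcmc : Continuous cm :=
    ContinuousMap.continuous_of_continuous_uncurry _ (continuous_snd.sub continuous_fst)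
  set T := fun x : EuclideanSpace ℝ (Fin d) => Lp.compMeasurePreserving (cm x) (hmp x) F with hT
  have hTc : Continuous T :=
    Continuous.compMeasurePreservingLp continuous_const hcmc hmp one_ne_top
  have hTae : ∀ x, (T x : EuclideanSpace ℝ (Fin d) → ℝ) =ᵐ[volume] fun t => f (t - x) := by
    intro x
    refine (Lp.coeFn_compMeasurePreserving F (hmp x)).trans ?_
    exact (hmp x).quasiMeasurePreserving.ae_eq hmem.coeFn_toLp
  have hgub : ∀ x, |g x - g 0| ≤ C * dist (T x) (T 0) := by
    intro x
    have h1 : g x - g 0 = ∫ t, (f t * f (t - x) - f t * f t) := by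
      rw [hg0, ← integral_sub (hgi x) hf2i]
    have hTsub : ((T x - T 0 : Lp ℝ 1 volume) : EuclideanSpace ℝ (Fin d) → ℝ)
        =ᵐ[volume] fun t => f (t - x) - f t := by
      filter_upwards [Lp.coeFn_sub (T x) (T 0), hTae x, hTae 0] with t ht1 ht2 ht3
      rw [ht1, Pi.sub_apply, ht2, ht3, sub_zero]
    have hdist : dist (T x) (T 0) = ∫ t, |f (t - x) - f t| := by
      rw [dist_eq_norm, L1.norm_eq_integral_norm]
      refine integral_congr_ae ?_
      filter_upwards [hTsub] with t ht
      rw [ht, Real.norm_eq_abs]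
    rw [h1, hdist]
    calc |∫ t, (f t * f (t - x) - f t * f t)|
        ≤ ∫ t, |f t * f (t - x) - f t * f t| := by
          simpa [Real.norm_eq_abs] using
            norm_integral_le_integral_norm (fun t => f t * f (t - x) - f t * f t)
      _ ≤ ∫ t, C * |f (t - x) - f t| := by
          refine integral_mono ((hgi x).sub hf2i).abs
            (((hfi.comp_sub_right x).sub hfi).abs.const_mul C) fun t => ?_
          simp only
          rw [← mul_sub, abs_mul, abs_of_nonneg (hf0 t)]
          exact mul_le_mul_of_nonneg_right (hC t) (abs_nonneg _)
      _ = C * ∫ t, |f (t - x) - f t| := integral_const_mul C _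
  have hcont : Filter.Tendsto g (nhds 0) (nhds (g 0)) := by
    have hd : Filter.Tendsto (fun x => dist (T x) (T 0)) (nhds 0) (nhds 0) := by
      have := (hTc.tendsto 0).dist (tendsto_const_nhds (x := T 0))
      simpa using this
    have hsq : Filter.Tendsto (fun x => g x - g 0) (nhds 0) (nhds 0) := by
      refine squeeze_zero_norm (a := fun x => C * dist (T x) (T 0))
        (fun x => by rw [Real.norm_eq_abs]; exact hgub x) ?_
      simpa using hd.const_mul C
    have := hsq.add_const (g 0)
    simpa using this
  -- conclude
  have hStop : essSup (fun x => ENNReal.ofReal (g x)) volume ≠ ⊤ :=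
    ne_top_of_le_ne_top ofReal_ne_top hle
  refine ENNReal.le_of_forall_pos_le_add fun ε hε _ => ?_
  have claim : ENNReal.ofReal (g 0 - ε) ≤ essSup (fun x => ENNReal.ofReal (g x)) volume := by
    by_contra hcon
    push_neg at hcon
    have hev : ∀ᶠ x in nhds (0 : EuclideanSpace ℝ (Fin d)), g 0 - ε < g x :=
      hcont.eventually (eventually_gt_nhds (sub_lt_self (g 0) (NNReal.coe_pos.mpr hε)))
    obtain ⟨δ, hδ0, hball⟩ := Metric.eventually_nhds_iff_ball.mp hev
    have hae := ae_le_essSup (fun x : EuclideanSpace ℝ (Fin d) => ENNReal.ofReal (g x))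
      (μ := volume)
    have hzero : volume (Metric.ball (0 : EuclideanSpace ℝ (Fin d)) δ) = 0 := by
      rw [measure_eq_zero_iff_ae_notMem]
      filter_upwards [hae] with x hx hxball
      have h1 : ENNReal.ofReal (g 0 - ε) ≤ ENNReal.ofReal (g x) :=
        ofReal_le_ofReal (hball x hxball).le
      exact absurd ((h1.trans hx).trans_lt hcon) (lt_irrefl _)
    exact absurd hzero (Metric.measure_ball_pos volume 0 hδ0).ne'
  calc ENNReal.ofReal (g 0) = ENNReal.ofReal ((g 0 - ε) + ε) := by ring_nf
    _ ≤ ENNReal.ofReal (g 0 - ε) + ENNReal.ofReal ε := ENNReal.ofReal_add_le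
    _ ≤ essSup (fun x => ENNReal.ofReal (g x)) volume + ε := by
        rw [ENNReal.ofReal_coe_nnreal]
        exact add_le_add_left claim _
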